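/- Let β>0, γ>0, 0<σ≤1, 0<α<1, S₀>0, R₀ᵢₙᵢₜ≥0, define r(S) := (γ/(σβ))·(1 − (1 − (σβ/γ)·R₀ᵢₙᵢₜ)·(S/S₀)^σ) and R̂(S) := (β/γ)·(S + ασ·r(S)) for 0≤S≤S₀. If R̂(S₀) = (β/γ)·(S₀ + ασR₀ᵢₙᵢₜ) ≤ 1, then R̂(S) ≤ 1 for all 0 ≤ S ≤ S₀. -/

import Mathlib

/-- For `0 < σ ≤ 1`, if `ℛ₀ = (β/γ)(S₀ + ασR₀) ≤ 1` then `R̂(S) ≤ 1`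
for all `0 ≤ S ≤ S₀`. -/
theorem sirb_Rhat_le_one_sigma_le_one (β γ σ α S₀ R₀init : ℝ)
    (hβ : 0 < β) (hγ : 0 < γ) (hσ : 0 < σ) (hσ1 : σ ≤ 1) (hα0 : 0 < α) (hα1 : α < 1)
    (hS₀ : 0 < S₀) (hR₀ : 0 ≤ R₀init)
    (r Rhat : ℝ → ℝ)
    (hr : ∀ S : ℝ, r S = γ / (σ * β) * (1 - (1 - σ * β / γ * R₀init) * (S / S₀) ^ σ))
    (hRhat : ∀ S : ℝ, Rhat S = β / γ * (S + α * σ * r S))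
    (hR0le : β / γ * (S₀ + α * σ * R₀init) ≤ 1) :
    ∀ S : ℝ, 0 ≤ S → S ≤ S₀ → Rhat S ≤ 1 := by
  intro S hS0 hSle
  set x : ℝ := S / S₀ with hxdef
  have hx0 : 0 ≤ x := div_nonneg hS0 hS₀.le
  have hx1 : x ≤ 1 := (div_le_one hS₀).2 hSle
  have hxs0 : 0 ≤ x ^ σ := Real.rpow_nonneg hx0 σ
  have hxs1 : x ^ σ ≤ 1 := Real.rpow_le_one hx0 hx1 hσ.le
  have hxle : x ≤ x ^ σ := by
    rcases eq_or_lt_of_le hx0 with h | h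
    · rw [← h, Real.zero_rpow hσ.ne']
    · calc x = x ^ (1 : ℝ) := (Real.rpow_one x).symm
        _ ≤ x ^ σ := Real.rpow_le_rpow_of_exponent_ge h hx1 hσ1
  set c : ℝ := 1 - σ * β / γ * R₀init with hcdef
  have key : Rhat S = β / γ * S + α * (1 - c * x ^ σ) := by
    rw [hRhat, hr]
    field_simp
    ring
  have hSx : S = S₀ * x := by rw [hxdef]; field_simp
  set K : ℝ := β / γ * S₀ - α * c with hKdef
  have hK : K ≤ 1 - α := by
    have : β / γ * (S₀ + α * σ * R₀init) = K + α := by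
      rw [hKdef, hcdef]
      field_simp
      ring
    linarith [hR0le, this ▸ hR0le]
  have h1 : Rhat S ≤ α + K * x ^ σ := by
    rw [key, hSx]
    have hbg : 0 ≤ β / γ * S₀ := by positivity
    nlinarith [mul_le_mul_of_nonneg_left hxle hbg]
  have h2 : K * x ^ σ ≤ 1 - α := by
    rcases le_or_gt 0 K with hK0 | hK0
    · calc K * x ^ σ ≤ K * 1 := by nlinarith
        _ ≤ 1 - α := by linarith
    · nlinarith
  linarith
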